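/- arXiv:2202.13182 — 2 statements merged into one kernel-verified Lean document; each statement's English description precedes it below -/
import Mathlib

section
/- If n, m, a are nonnegative integers with n > m, n ≥ 2, and L_n + L_m = 3^a, then 0 < a·log 3 − n·log α < 3/α^{n−m}. -/
/-- The Lucas sequence: `L 0 = 2`, `L 1 = 1`, `L (n+2) = L (n+1) + L n`. -/
def lucas : ℕ → ℕ
  | 0 => 2
  | 1 => 1
  | n + 2 => lucas (n + 1) + lucas n

/-- The golden ratio `α = (1 + √5)/2`. -/
noncomputable def α : ℝ := (1 + Real.sqrt 5) / 2

noncomputable def lucasβ : ℝ := (1 - Real.sqrt 5) / 2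

lemma sqrt5_sq : (Real.sqrt 5) ^ 2 = 5 := Real.sq_sqrt (by norm_num)

lemma sqrt5_gt : (2:ℝ) < Real.sqrt 5 := by
  nlinarith [sqrt5_sq, Real.sqrt_nonneg 5]

lemma sqrt5_lt : Real.sqrt 5 < 3 := by
  nlinarith [sqrt5_sq, Real.sqrt_nonneg 5]

lemma α_sq : α ^ 2 = α + 1 := by
  show ((1 + Real.sqrt 5)/2) ^ 2 = (1 + Real.sqrt 5)/2 + 1
  linear_combination sqrt5_sq / 4

lemma β_sq : lucasβ ^ 2 = lucasβ + 1 := by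
  show ((1 - Real.sqrt 5)/2) ^ 2 = (1 - Real.sqrt 5)/2 + 1
  linear_combination sqrt5_sq / 4

lemma α_gt_one : (1:ℝ) < α := by
  unfold α; nlinarith [sqrt5_gt]

lemma β_bounds : -1 < lucasβ ∧ lucasβ < 0 := by
  unfold lucasβ; constructor <;> nlinarith [sqrt5_gt, sqrt5_lt]

lemma lucas_pos : ∀ n, 0 < lucas n := by
  intro n
  induction n using Nat.strong_induction_on with
  | _ n ih =>
    match n with
    | 0 => simp [lucas]
    | 1 => simp [lucas]
    | n + 2 =>
      rw [lucas]
      have := ih n (by omega)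
      omega

lemma lucas_eq : ∀ n, (lucas n : ℝ) = α ^ n + lucasβ ^ n := by
  intro n
  induction n using Nat.strong_induction_on with
  | _ n ih =>
    match n with
    | 0 => simp [lucas]; norm_num
    | 1 =>
      show ((1:ℕ) : ℝ) = α ^ 1 + lucasβ ^ 1
      unfold α lucasβ; push_cast; ring
    | n + 2 =>
      rw [lucas]
      push_cast
      rw [ih (n+1) (by omega), ih n (by omega)]
      linear_combination (-(α ^ n)) * α_sq + (-(lucasβ ^ n)) * β_sq

/-- If `n > m`, `n ≥ 2` and `L n + L m = 3^a`, then `0 < a·log 3 − n·log α < 3/α^(n−m)`. -/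
theorem linear_form_bounds (n m a : ℕ) (hnm : m < n) (hn : 2 ≤ n)
    (h : lucas n + lucas m = 3 ^ a) :
    0 < (a : ℝ) * Real.log 3 - (n : ℝ) * Real.log α ∧
    (a : ℝ) * Real.log 3 - (n : ℝ) * Real.log α < 3 / α ^ (n - m) := by
  have hα1 : (1:ℝ) < α := α_gt_one
  have hαpos : (0:ℝ) < α := by linarith
  have hβ := β_bounds
  have hβabs : |lucasβ| < 1 := by
    rw [abs_lt]; exact ⟨hβ.1, by linarith [hβ.2]⟩
  set k := n - m with hkdef
  have hk : n = m + k := by omega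
  have hk1 : 1 ≤ k := by omega
  -- cast hypothesis
  have hR : (lucas n : ℝ) + (lucas m : ℝ) = 3 ^ a := by exact_mod_cast h
  rw [lucas_eq n] at hR
  -- bounds on β powers
  have hβn : |lucasβ ^ n| < 1 := by
    rw [abs_pow]
    exact pow_lt_one₀ (abs_nonneg _) hβabs (by omega)
  have hβn1 : -1 < lucasβ ^ n := by
    have := abs_lt.mp hβn; linarith [this.1]
  have hβn2 : lucasβ ^ n ≤ 1 := by
    have := abs_lt.mp hβn; linarith [this.2]
  have hβm : lucasβ ^ m ≤ 1 := by
    have : |lucasβ ^ m| ≤ 1 := by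
      rw [abs_pow]; exact pow_le_one₀ (abs_nonneg _) (le_of_lt hβabs)
    linarith [(abs_le.mp this).2]
  have hLm1 : (1:ℝ) ≤ (lucas m : ℝ) := by exact_mod_cast lucas_pos m
  have hαm1 : (1:ℝ) ≤ α ^ m := one_le_pow₀ (le_of_lt hα1)
  have hαnpos : (0:ℝ) < α ^ n := pow_pos hαpos n
  have hαkpos : (0:ℝ) < α ^ k := pow_pos hαpos k
  have h3pos : (0:ℝ) < 3 ^ a := by positivity
  -- lower bound: α^n < 3^a
  have hlow : α ^ n < 3 ^ a := by nlinarith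
  -- upper bound: 3^a ≤ α^n * (1 + 3/α^k)
  have hLmle : (lucas m : ℝ) ≤ α ^ m + 1 := by
    rw [lucas_eq m]; linarith
  have hup0 : (3:ℝ) ^ a ≤ α ^ n + 3 * α ^ m := by nlinarith
  have hαnk : α ^ n = α ^ m * α ^ k := by rw [hk, pow_add]
  have hup : (3:ℝ) ^ a ≤ α ^ n * (1 + 3 / α ^ k) := by
    have : α ^ n * (1 + 3 / α ^ k) = α ^ n + 3 * α ^ m := by
      rw [hαnk]; field_simp
    linarith [this ▸ hup0]
  -- translate to logs
  have hlog1 : (n:ℝ) * Real.log α < (a:ℝ) * Real.log 3 := by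
    have := Real.log_lt_log hαnpos hlow
    rwa [Real.log_pow, Real.log_pow] at this
  have hxpos : (0:ℝ) < 3 / α ^ k := by positivity
  have hlog2 : (a:ℝ) * Real.log 3 ≤ (n:ℝ) * Real.log α + Real.log (1 + 3 / α ^ k) := by
    have h1 := Real.log_le_log h3pos hup
    rw [Real.log_mul (ne_of_gt hαnpos) (by positivity), Real.log_pow] at h1
    rwa [Real.log_pow] at h1
  have hlog3 : Real.log (1 + 3 / α ^ k) < 3 / α ^ k := by
    have := Real.log_lt_sub_one_of_pos (x := 1 + 3 / α ^ k) (by linarith) (by linarith)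
    linarith
  exact ⟨by linarith, by linarith⟩
end

section
/- There are no nonnegative integers n, m, a with n > m and n > 200 such that 3^a = α^n + α^m; in particular, for such n, m, a the quantity Λ = 3^a·α^{−n}·(1 + α^{m−n})^{−1} − 1 is nonzero. -/
lemma alpha_sq : α * α = α + 1 := by
  have h5 : Real.sqrt 5 * Real.sqrt 5 = 5 := Real.mul_self_sqrt (by norm_num)
  unfold α
  nlinarith [h5]

lemma alpha_pos : 0 < α := by
  have := Real.sqrt_nonneg 5
  unfold α; linarith

lemma alpha_irrational : Irrational α := Real.goldenRatio_irrational

lemma alpha_pow (k : ℕ) :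
    α ^ k = (Nat.fib k : ℝ) * α + ((Nat.fib (k + 1) : ℝ) - (Nat.fib k : ℝ)) := by
  induction k with
  | zero => simp
  | succ k ih =>
    have hfib : (Nat.fib (k + 2) : ℝ) = Nat.fib (k + 1) + Nat.fib k := by
      rw [Nat.fib_add_two]; push_cast; ring
    rw [pow_succ, ih, hfib]
    nlinarith [alpha_sq]

/-- There are no nonnegative integers `n, m, a` with `n > m` and `n > 200` such that
`3^a = α^n + α^m`; in particular, for such `n, m, a` the quantity
`Λ = 3^a·α^(−n)·(1 + α^(m−n))⁻¹ − 1` is nonzero. -/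
theorem Lambda_ne_zero :
    (¬ ∃ n m a : ℕ, m < n ∧ 200 < n ∧ (3 : ℝ) ^ a = α ^ n + α ^ m) ∧
    (∀ n m a : ℕ, m < n → 200 < n →
      (3 : ℝ) ^ a * α ^ (-(n : ℤ)) * (1 + α ^ ((m : ℤ) - (n : ℤ)))⁻¹ - 1 ≠ 0) := by
  have main : ¬ ∃ n m a : ℕ, m < n ∧ 200 < n ∧ (3 : ℝ) ^ a = α ^ n + α ^ m := by
    rintro ⟨n, m, a, hmn, hn, heq⟩
    rw [alpha_pow n, alpha_pow m] at heq
    have hfn : 0 < Nat.fib n := Nat.fib_pos.mpr (by omega)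
    have hD : (0 : ℝ) < (Nat.fib n : ℝ) + (Nat.fib m : ℝ) := by
      have : (0 : ℝ) < (Nat.fib n : ℝ) := by exact_mod_cast hfn
      have : (0 : ℝ) ≤ (Nat.fib m : ℝ) := by positivity
      linarith
    set q : ℚ := ((3 : ℚ) ^ a - (Nat.fib (n + 1) : ℚ) + (Nat.fib n : ℚ)
        - (Nat.fib (m + 1) : ℚ) + (Nat.fib m : ℚ)) / ((Nat.fib n : ℚ) + (Nat.fib m : ℚ)) with hq
    have hcast : ((q : ℚ) : ℝ) = α := by
      rw [hq]
      push_cast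
      rw [div_eq_iff (ne_of_gt hD)]
      linarith [heq]
    exact alpha_irrational ⟨q, hcast⟩
  refine ⟨main, fun n m a hmn hn h0 => ?_⟩
  apply main
  refine ⟨n, m, a, hmn, hn, ?_⟩
  have hα : (0 : ℝ) < α := alpha_pos
  have hαne : α ≠ 0 := ne_of_gt hα
  have hz1 : α ^ (-(n : ℤ)) = (α ^ n)⁻¹ := by
    rw [zpow_neg, zpow_natCast]
  have hz2 : α ^ ((m : ℤ) - (n : ℤ)) = α ^ m / α ^ n := by
    rw [zpow_sub₀ hαne, zpow_natCast, zpow_natCast]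
  rw [hz1, hz2, sub_eq_zero] at h0
  have hpn : (0 : ℝ) < α ^ n := pow_pos hα n
  have hpm : (0 : ℝ) < α ^ m := pow_pos hα m
  have hden : (0 : ℝ) < 1 + α ^ m / α ^ n := by positivity
  field_simp at h0
  linarith [h0]
end
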